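/- For integers r,s ≥ 2, the shuffle product identity holds: ζ^{o}(r) · ζ^{e}(s) = Σ_{i+j=r+s, i≥2, j≥1} [ C(i−1,r−1) ζ^{oe}(i,j) + C(i−1,s−1) ζ^{oo}(i,j) ], where C(n,k) denotes the binomial coefficient, ζ^{o}(k) = Σ_{n odd>0} 1/n^k, ζ^{e}(k) = Σ_{n even>0} 1/n^k, ζ^{oe}(i,j) = Σ_{m>n>0, m odd, n even} 1/(m^i n^j), and ζ^{oo}(i,j) = Σ_{m>n>0, m,n odd} 1/(m^i n^j). -/

import Mathlib

/-- ζ^{o}(k) = Σ_{n>0 odd} 1/n^k -/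
noncomputable def zetaO (k : ℕ) : ℝ :=
  ∑' n : {n : ℕ // 0 < n ∧ Odd n}, 1 / ((n : ℕ) : ℝ) ^ k

/-- ζ^{e}(k) = Σ_{n>0 even} 1/n^k -/
noncomputable def zetaE (k : ℕ) : ℝ :=
  ∑' n : {n : ℕ // 0 < n ∧ Even n}, 1 / ((n : ℕ) : ℝ) ^ k

/-- ζ^{eo}(r,s) -/
noncomputable def dzetaEO (r s : ℕ) : ℝ :=
  ∑' p : {p : ℕ × ℕ // p.2 < p.1 ∧ 0 < p.2 ∧ Even p.1 ∧ Odd p.2},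
    1 / ((p.1.1 : ℝ) ^ r * (p.1.2 : ℝ) ^ s)

/-- ζ^{oe}(r,s) -/
noncomputable def dzetaOE (r s : ℕ) : ℝ :=
  ∑' p : {p : ℕ × ℕ // p.2 < p.1 ∧ 0 < p.2 ∧ Odd p.1 ∧ Even p.2},
    1 / ((p.1.1 : ℝ) ^ r * (p.1.2 : ℝ) ^ s)

/-- ζ^{oo}(r,s) -/
noncomputable def dzetaOO (r s : ℕ) : ℝ :=
  ∑' p : {p : ℕ × ℕ // p.2 < p.1 ∧ 0 < p.2 ∧ Odd p.1 ∧ Odd p.2},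
    1 / ((p.1.1 : ℝ) ^ r * (p.1.2 : ℝ) ^ s)

open Finset


lemma pf_base (x y : ℝ) (hx : 0 < x) (hy : 0 < y) (s : ℕ) :
    1/(x * y^(s+1)) =
      (∑ j ∈ Finset.range (s+1), 1 / ((x+y)^(1+j) * y^(s+1-j)))
    + 1 / ((x+y)^(s+1) * x) := by
  have hxy : (0:ℝ) < x + y := by positivity
  induction s with
  | zero => simp; field_simp
  | succ s ih =>
    have key : 1/(x * y^(s+1+1)) =
        1/((x+y) * y^(s+1+1)) + (1/(x+y)) * (1/(x * y^(s+1))) := by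
      field_simp
      ring
    rw [key, ih, mul_add, Finset.mul_sum, Finset.sum_range_succ'
      (fun j => (1:ℝ) / ((x+y)^(1+j) * y^(s+1+1-j)))]
    have e1 : ∀ j ∈ Finset.range (s+1),
        (1:ℝ)/((x+y)^(1+(j+1)) * y^(s+1+1-(j+1))) = 1/(x+y) * (1/((x+y)^(1+j) * y^(s+1-j))) := by
      intro j hj
      rw [show 1+(j+1) = (1+j)+1 by omega, show s+1+1-(j+1) = s+1-j by omega]
      generalize (x+y) = w
      rw [pow_succ]; ring
    rw [Finset.sum_congr rfl e1]
    have e2 : (1:ℝ)/((x+y)^(s+1+1) * x) = 1/(x+y) * (1/((x+y)^(s+1) * x)) := by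
      generalize (x+y) = w
      rw [pow_succ]; ring
    have e3 : (1:ℝ)/((x+y)^(1+0) * y^(s+1+1-0)) = 1/((x+y) * y^(s+1+1)) := by
      norm_num
    rw [e2, e3]
    ring

lemma combo (w z : ℝ) (a b : ℕ) :
    (∑ j ∈ Finset.range (b+1+1), ((a+1+j).choose (a+1) : ℝ) / (w^(a+1+1+j) * z^(b+1+1-j)))
    = 1/w * (∑ j ∈ Finset.range (b+1+1), ((a+j).choose a : ℝ) / (w^(a+1+j) * z^(b+1+1-j)))
    + 1/w * (∑ j ∈ Finset.range (b+1), ((a+1+j).choose (a+1) : ℝ) / (w^(a+1+1+j) * z^(b+1-j))) := by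
  rw [Finset.mul_sum, Finset.mul_sum]
  have split : ∀ j ∈ Finset.range (b+1+1),
      ((a+1+j).choose (a+1) : ℝ)/(w^(a+1+1+j) * z^(b+1+1-j))
      = 1/w * (((a+j).choose a : ℝ)/(w^(a+1+j) * z^(b+1+1-j)))
        + (((a+j).choose (a+1) : ℝ)/(w^(a+1+1+j) * z^(b+1+1-j))) := by
    intro j hj
    have hps : (a+1+j).choose (a+1) = (a+j).choose a + (a+j).choose (a+1) := by
      rw [show a+1+j = (a+j)+1 by omega]
      exact Nat.choose_succ_succ _ _
    rw [hps]
    push_cast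
    rw [show a+1+1+j = (a+1+j)+1 by omega, pow_succ]
    ring
  rw [Finset.sum_congr rfl split, Finset.sum_add_distrib]
  congr 1
  rw [Finset.sum_range_succ' (fun j => ((a+j).choose (a+1) : ℝ)/(w^(a+1+1+j) * z^(b+1+1-j)))]
  have z0 : ((a+0).choose (a+1) : ℝ) = 0 := by
    simp [Nat.choose_eq_zero_of_lt]
  rw [z0, zero_div, add_zero]
  apply Finset.sum_congr rfl
  intro j hj
  rw [show a+(j+1) = a+1+j by omega, show b+1+1-(j+1) = b+1-j by omega,
    show a+1+1+(j+1) = (a+1+1+j)+1 by omega, pow_succ]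
  ring

lemma pf1 : ∀ n r s : ℕ, r + s = n → ∀ x y : ℝ, 0 < x → 0 < y →
    1/(x^(r+1) * y^(s+1)) =
      (∑ j ∈ Finset.range (s+1), ((r+j).choose r : ℝ) / ((x+y)^(r+1+j) * y^(s+1-j)))
    + (∑ j ∈ Finset.range (r+1), ((s+j).choose s : ℝ) / ((x+y)^(s+1+j) * x^(r+1-j))) := by
  intro n
  induction n with
  | zero =>
    intro r s hn x y hx hy
    obtain ⟨rfl, rfl⟩ : r = 0 ∧ s = 0 := by omega
    have hxy : x + y ≠ 0 := by positivity
    simp only [Finset.sum_range_one, Nat.choose_self, Nat.choose_zero_right]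
    simp
    field_simp
  | succ n ihn =>
    intro r s hn x y hx hy
    match r, s with
    | 0, s =>
      simpa using pf_base x y hx hy s
    | a+1, 0 =>
      have h := pf_base y x hy hx (a+1)
      rw [add_comm y x] at h
      simp only [Finset.sum_range_one, Nat.add_zero, Nat.choose_self, Nat.choose_zero_right,
        Nat.cast_one, zero_add]
      rw [pow_one, mul_comm (x^(a+1+1)) y, h, show a+2 = a+1+1 by omega]
      norm_num
      ring
    | a+1, b+1 =>
      have ih1 := ihn a (b+1) (by omega) x y hx hy
      have ih2 := ihn (a+1) b (by omega) x y hx hy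
      have hxy : (0:ℝ) < x + y := by positivity
      have key : 1/(x^(a+1+1) * y^(b+1+1)) =
          1/(x+y) * (1/(x^(a+1) * y^(b+1+1)) + 1/(x^(a+1+1) * y^(b+1))) := by
        field_simp
        ring
      rw [key, ih1, ih2, combo (x+y) y a b, combo (x+y) x b a]
      ring

lemma icc_to_range (a b : ℕ) (ha : 1 ≤ a) (w z : ℝ) :
    ∑ i ∈ Finset.Icc 2 (a+b+1), ((i-1).choose a : ℝ) * (1/(w^i * z^(a+b+2-i)))
    = ∑ j ∈ Finset.range (b+1), ((a+j).choose a : ℝ) / (w^(a+1+j) * z^(b+1-j)) := by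
  rw [← Finset.Ico_add_one_right_eq_Icc, show a+b+1+1 = a+b+2 by omega]
  have h1 : ∑ i ∈ Finset.Ico 2 (a+b+2), ((i-1).choose a : ℝ) * (1/(w^i * z^(a+b+2-i)))
      = ∑ i ∈ Finset.Ico (a+1) (a+b+2), ((i-1).choose a : ℝ) * (1/(w^i * z^(a+b+2-i))) := by
    refine (Finset.sum_subset (Finset.Ico_subset_Ico (by omega) le_rfl) ?_).symm
    intro i hi hni
    simp only [Finset.mem_Ico] at hi hni
    have hlt : i - 1 < a := by omega
    rw [Nat.choose_eq_zero_of_lt hlt]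
    simp
  rw [h1, Finset.sum_Ico_eq_sum_range, show a+b+2-(a+1) = b+1 by omega]
  apply Finset.sum_congr rfl
  intro j hj
  rw [show a+1+j-1 = a+j by omega, show a+b+2-(a+1+j) = b+1-j by omega, mul_one_div]
lemma pf (r s : ℕ) (hr : 2 ≤ r) (hs : 2 ≤ s) (x y : ℝ) (hx : 0 < x) (hy : 0 < y) :
    (1/x^r) * (1/y^s) =
      ∑ i ∈ Finset.Icc 2 (r+s-1),
        (((i-1).choose (r-1) : ℝ) * (1/((x+y)^i * y^(r+s-i))) +
         ((i-1).choose (s-1) : ℝ) * (1/((x+y)^i * x^(r+s-i)))) := by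
  obtain ⟨a, rfl⟩ : ∃ a, r = a+1 := ⟨r-1, by omega⟩
  obtain ⟨b, rfl⟩ : ∃ b, s = b+1 := ⟨s-1, by omega⟩
  have ha : 1 ≤ a := by omega
  have hb : 1 ≤ b := by omega
  have h := pf1 (a+b) a b rfl x y hx hy
  rw [Finset.sum_add_distrib, show (1/x^(a+1)) * (1/y^(b+1)) = 1/(x^(a+1) * y^(b+1)) by ring,
    h, show a+1+(b+1)-1 = a+b+1 by omega]
  congr 1
  · rw [← icc_to_range a b ha (x+y) y]
    apply Finset.sum_congr rfl
    intro i hi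
    rw [show a+1-1 = a by omega, show a+1+(b+1)-i = a+b+2-i by omega]
  · rw [← icc_to_range b a hb (x+y) x, show b+a+1 = a+b+1 by omega]
    apply Finset.sum_congr rfl
    intro i hi
    rw [show b+1-1 = b by omega, show a+1+(b+1)-i = b+a+2-i by omega]

lemma summable_sub_pow {k : ℕ} (hk : 2 ≤ k) (P : ℕ → Prop) :
    Summable (fun n : {n : ℕ // P n} => 1/((n:ℕ):ℝ)^k) := by
  have h := Real.summable_one_div_nat_pow.mpr hk
  exact h.subtype _

lemma aux_le {x y : ℝ} (hx : 0 < x) (hy : 0 < y) {r s i : ℕ} (hri : r ≤ i) (his : i ≤ r + s) :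
    1/((x+y)^i * y^(r+s-i)) ≤ 1/(x^r * y^s) := by
  apply one_div_le_one_div_of_le (by positivity)
  calc x^r * y^s = x^r * (y^(i-r) * y^(r+s-i)) := by
        rw [← pow_add, show i-r+(r+s-i) = s by omega]
    _ ≤ (x+y)^r * ((x+y)^(i-r) * y^(r+s-i)) := by
        gcongr <;> linarith
    _ = (x+y)^i * y^(r+s-i) := by
        rw [← mul_assoc, ← pow_add, show r+(i-r) = i by omega]

def eOE : {n : ℕ // 0 < n ∧ Odd n} × {n : ℕ // 0 < n ∧ Even n} ≃
    {p : ℕ × ℕ // p.2 < p.1 ∧ 0 < p.2 ∧ Odd p.1 ∧ Even p.2} where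
  toFun p := ⟨(p.1.1 + p.2.1, p.2.1),
    ⟨by have := p.1.2.1; omega, p.2.2.1, p.1.2.2.add_even p.2.2.2, p.2.2.2⟩⟩
  invFun q := (⟨q.1.1 - q.1.2, ⟨by have := q.2.1; omega,
      Nat.Odd.sub_even q.2.1.le q.2.2.2.1 q.2.2.2.2⟩⟩,
    ⟨q.1.2, q.2.2.1, q.2.2.2.2⟩)
  left_inv p := by
    rcases p with ⟨⟨a, ha⟩, ⟨b, hb⟩⟩
    simp [Prod.ext_iff, Subtype.ext_iff]
  right_inv q := by
    rcases q with ⟨⟨m, n⟩, h⟩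
    simp only [Prod.ext_iff, Subtype.ext_iff]
    refine ⟨?_, trivial⟩
    have := h.1
    omega

def eOO : {n : ℕ // 0 < n ∧ Odd n} × {n : ℕ // 0 < n ∧ Even n} ≃
    {p : ℕ × ℕ // p.2 < p.1 ∧ 0 < p.2 ∧ Odd p.1 ∧ Odd p.2} where
  toFun p := ⟨(p.1.1 + p.2.1, p.1.1),
    ⟨by have := p.2.2.1; omega, p.1.2.1, p.1.2.2.add_even p.2.2.2, p.1.2.2⟩⟩
  invFun q := (⟨q.1.2, q.2.2.1, q.2.2.2.2⟩,
    ⟨q.1.1 - q.1.2, ⟨by have := q.2.1; omega,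
      Nat.Odd.sub_odd q.2.2.2.1 q.2.2.2.2⟩⟩)
  left_inv p := by
    rcases p with ⟨⟨a, ha⟩, ⟨b, hb⟩⟩
    simp [Prod.ext_iff, Subtype.ext_iff]
  right_inv q := by
    rcases q with ⟨⟨m, n⟩, h⟩
    simp only [Prod.ext_iff, Subtype.ext_iff]
    refine ⟨?_, trivial⟩
    have := h.1
    omega

set_option maxHeartbeats 2000000 in
theorem shuffle_oe (r s : ℕ) (hr : 2 ≤ r) (hs : 2 ≤ s) :
    zetaO r * zetaE s =
      ∑ i ∈ Finset.Icc 2 (r + s - 1),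
        (((i - 1).choose (r - 1) : ℝ) * dzetaOE i (r + s - i) +
          ((i - 1).choose (s - 1) : ℝ) * dzetaOO i (r + s - i)) := by
  have hfo : Summable (fun n : {n : ℕ // 0 < n ∧ Odd n} => 1/((n:ℕ):ℝ)^r) :=
    summable_sub_pow hr _
  have hfe : Summable (fun n : {n : ℕ // 0 < n ∧ Even n} => 1/((n:ℕ):ℝ)^s) :=
    summable_sub_pow hs _
  have hprod : Summable (fun p : {n : ℕ // 0 < n ∧ Odd n} × {n : ℕ // 0 < n ∧ Even n} =>
      (1/((p.1:ℕ):ℝ)^r) * (1/((p.2:ℕ):ℝ)^s)) :=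
    hfo.mul_of_nonneg hfe (fun n => by positivity) (fun n => by positivity)
  have hprod' : Summable (fun p : {n : ℕ // 0 < n ∧ Odd n} × {n : ℕ // 0 < n ∧ Even n} =>
      1/(((p.1:ℕ):ℝ)^r * ((p.2:ℕ):ℝ)^s)) :=
    hprod.congr (fun p => one_div_mul_one_div _ _)
  have hmul : zetaO r * zetaE s
      = ∑' p : {n : ℕ // 0 < n ∧ Odd n} × {n : ℕ // 0 < n ∧ Even n},
        (1/((p.1:ℕ):ℝ)^r) * (1/((p.2:ℕ):ℝ)^s) := by
    apply tsum_mul_tsum_of_summable_norm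
    · exact hfo.congr (fun n => (Real.norm_of_nonneg (by positivity)).symm)
    · exact hfe.congr (fun n => (Real.norm_of_nonneg (by positivity)).symm)
  have key : ∀ p : {n : ℕ // 0 < n ∧ Odd n} × {n : ℕ // 0 < n ∧ Even n},
      (1/((p.1:ℕ):ℝ)^r) * (1/((p.2:ℕ):ℝ)^s)
      = ∑ i ∈ Finset.Icc 2 (r+s-1),
          (((i-1).choose (r-1) : ℝ) *
              (1/((((p.1:ℕ):ℝ)+((p.2:ℕ):ℝ))^i * ((p.2:ℕ):ℝ)^(r+s-i))) +
           ((i-1).choose (s-1) : ℝ) *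
              (1/((((p.1:ℕ):ℝ)+((p.2:ℕ):ℝ))^i * ((p.1:ℕ):ℝ)^(r+s-i)))) :=
    fun p => pf r s hr hs _ _ (Nat.cast_pos.mpr p.1.2.1) (Nat.cast_pos.mpr p.2.2.1)
  have hsum1 : ∀ i ∈ Finset.Icc 2 (r+s-1),
      Summable (fun p : {n : ℕ // 0 < n ∧ Odd n} × {n : ℕ // 0 < n ∧ Even n} =>
        ((i-1).choose (r-1) : ℝ) *
          (1/((((p.1:ℕ):ℝ)+((p.2:ℕ):ℝ))^i * ((p.2:ℕ):ℝ)^(r+s-i)))) := by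
    intro i hi
    simp only [Finset.mem_Icc] at hi
    rcases lt_or_ge i r with h | h
    · have h0 : (i-1).choose (r-1) = 0 := Nat.choose_eq_zero_of_lt (by omega)
      simp only [h0, Nat.cast_zero, zero_mul]
      exact summable_zero
    · apply Summable.of_nonneg_of_le (fun p => by positivity) (fun p => ?_)
        (hprod'.mul_left ((i-1).choose (r-1) : ℝ))
      exact mul_le_mul_of_nonneg_left
        (aux_le (Nat.cast_pos.mpr p.1.2.1) (Nat.cast_pos.mpr p.2.2.1) h (by omega))
        (Nat.cast_nonneg _)
  have hsum2 : ∀ i ∈ Finset.Icc 2 (r+s-1),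
      Summable (fun p : {n : ℕ // 0 < n ∧ Odd n} × {n : ℕ // 0 < n ∧ Even n} =>
        ((i-1).choose (s-1) : ℝ) *
          (1/((((p.1:ℕ):ℝ)+((p.2:ℕ):ℝ))^i * ((p.1:ℕ):ℝ)^(r+s-i)))) := by
    intro i hi
    simp only [Finset.mem_Icc] at hi
    rcases lt_or_ge i s with h | h
    · have h0 : (i-1).choose (s-1) = 0 := Nat.choose_eq_zero_of_lt (by omega)
      simp only [h0, Nat.cast_zero, zero_mul]
      exact summable_zero
    · apply Summable.of_nonneg_of_le (fun p => by positivity) (fun p => ?_)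
        (hprod'.mul_left ((i-1).choose (s-1) : ℝ))
      refine mul_le_mul_of_nonneg_left ?_ (Nat.cast_nonneg _)
      have hb := aux_le (Nat.cast_pos.mpr p.2.2.1) (Nat.cast_pos.mpr p.1.2.1)
        (r := s) (s := r) h (by omega)
      rw [add_comm ((p.2:ℕ):ℝ) ((p.1:ℕ):ℝ), show s+r-i = r+s-i by omega,
        mul_comm (((p.2:ℕ):ℝ)^s) (((p.1:ℕ):ℝ)^r)] at hb
      exact hb
  rw [hmul, tsum_congr key, Summable.tsum_finsetSum (fun i hi => (hsum1 i hi).add (hsum2 i hi))]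
  refine Finset.sum_congr rfl fun i hi => ?_
  rw [Summable.tsum_add (hsum1 i hi) (hsum2 i hi), tsum_mul_left, tsum_mul_left]
  congr 1
  · congr 1
    unfold dzetaOE
    rw [← Equiv.tsum_eq eOE (fun q => 1 / ((q.1.1 : ℝ) ^ i * (q.1.2 : ℝ) ^ (r+s-i)))]
    apply tsum_congr
    intro p
    simp only [eOE, Equiv.coe_fn_mk]
    push_cast
    ring
  · congr 1
    unfold dzetaOO
    rw [← Equiv.tsum_eq eOO (fun q => 1 / ((q.1.1 : ℝ) ^ i * (q.1.2 : ℝ) ^ (r+s-i)))]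
    apply tsum_congr
    intro p
    simp only [eOO, Equiv.coe_fn_mk]
    push_cast
    ring
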